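/- For every integer n ∈ ℤ there exists a unique binary word w of odd length such that: w avoids the factor 11, w does not begin with the prefix 000, w does not begin with the prefix 101, and n = val_F(w). (Existence and uniqueness of the canonical Fibonacci representation of an integer.) -/

import Mathlib

/-- Fibonacci sequence with `F 0 = 1`, `F 1 = 1`, `F 2 = 2`. -/
def F : ℕ → ℤ
  | 0 => 1
  | 1 => 1
  | (n+2) => F (n+1) + F n

/-- Numerical value of a binary digit. -/
def bv (x : Bool) : ℤ := if x then 1 else 0

/-- Value of an odd-length binary word `w = w_{2k+1} ⋯ w_1` (most significant
digit first): `val_F(w) = Σ_{i=1}^{2k} w_i F_i − w_{2k+1} F_{2k}`. -/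
def valF (w : List Bool) : ℤ :=
  (∑ i ∈ Finset.range (w.length - 1), bv (w.reverse.getD i false) * F (i+1))
    - bv (w.reverse.getD (w.length - 1) false) * F (w.length - 1)

/-- The word has no factor `11`. -/
def no11 (w : List Bool) : Prop :=
  List.Chain' (fun x y => ¬(x = true ∧ y = true)) w

/-- Words of the canonical representation language: odd length, no factor 11,
not beginning with 000 nor with 101. -/
def IsRep (w : List Bool) : Prop :=
  Odd w.length ∧ no11 w ∧
    ¬ ([false, false, false] <+: w) ∧ ¬ ([true, false, true] <+: w)

/-- `Ik k = {i ∈ ℤ : −F_{2k} ≤ i < F_{2k+1}}`. -/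
def Ik (k : ℕ) : Set ℤ := {i : ℤ | -F (2*k) ≤ i ∧ i < F (2*k+1)}

/-- Shifted version of `Ik` incorporating `I_{−1} = ∅`. -/
def Iext : ℕ → Set ℤ
  | 0 => ∅
  | (k+1) => Ik k

/-- The morphism `h : 0 ↦ 00, 1 ↦ 01, 2 ↦ 10` on single letters. -/
def h3 : Fin 3 → List Bool
  | 0 => [false, false]
  | 1 => [false, true]
  | 2 => [true, false]

lemma F_add_two (n : ℕ) : F (n+2) = F (n+1) + F n := rfl

lemma F_pos : ∀ n, 0 < F n := by
  have h : ∀ n, 0 < F n ∧ 0 < F (n+1) := by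
    intro n
    induction n with
    | zero => exact ⟨one_pos, one_pos⟩
    | succ m ih => exact ⟨ih.2, by rw [F_add_two]; linarith [ih.1, ih.2]⟩
  exact fun n => (h n).1

lemma F_mono : Monotone F := by
  apply monotone_nat_of_le_succ
  intro n
  cases n with
  | zero => norm_num [F]
  | succ m => rw [F_add_two]; linarith [F_pos m]

lemma F_ge (n : ℕ) : (n : ℤ) ≤ F n := by
  induction n using Nat.strong_induction_on with
  | _ n ih =>
    match n with
    | 0 => norm_num [F]
    | 1 => norm_num [F]
    | (m+2) =>
      have h1 := ih (m+1) (by omega)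
      have h2 := F_pos m
      rw [F_add_two]
      push_cast
      push_cast at h1
      linarith

def sF : List Bool → ℕ → ℤ
  | [], _ => 0
  | (a :: u), j => bv a * F j + sF u (j+1)

lemma sF_append (u t : List Bool) (j : ℕ) : sF (u ++ t) j = sF u j + sF t (j + u.length) := by
  induction u generalizing j with
  | nil => simp [sF]
  | cons a u ih =>
    show bv a * F j + sF (u ++ t) (j+1) = _
    rw [ih (j+1)]
    simp only [List.length_cons]
    rw [show j + (u.length + 1) = j + 1 + u.length by omega,
        show sF (a :: u) j = bv a * F j + sF u (j+1) from rfl]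
    ring

lemma sum_getD (r : List Bool) (j : ℕ) :
    (∑ i ∈ Finset.range r.length, bv (r.getD i false) * F (i+j)) = sF r j := by
  induction r generalizing j with
  | nil => simp [sF]
  | cons a u ih =>
    rw [List.length_cons, Finset.sum_range_succ']
    simp only [List.getD_cons_succ, List.getD_cons_zero, sF]
    rw [show (∑ i ∈ Finset.range u.length, bv (u.getD i false) * F (i + 1 + j))
        = ∑ i ∈ Finset.range u.length, bv (u.getD i false) * F (i + (j+1)) by
      apply Finset.sum_congr rfl; intro i _; ring_nf]
    rw [ih (j+1)]
    ring

lemma valF_cons (c : Bool) (t : List Bool) :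
    valF (c :: t) = sF t.reverse 1 - bv c * F t.length := by
  unfold valF
  simp only [List.length_cons, List.reverse_cons, Nat.add_sub_cancel]
  have h1 : ∀ i < t.length, (t.reverse ++ [c]).getD i false = t.reverse.getD i false := by
    intro i hi
    exact List.getD_append _ _ _ _ (by simpa using hi)
  have h2 : (t.reverse ++ [c]).getD t.length false = c := by
    rw [List.getD_append_right _ _ _ _ (by simp)]
    simp
  rw [h2]
  congr 1
  rw [← sum_getD t.reverse 1]
  apply Finset.sum_congr (by simp)
  intro i hi
  rw [h1 i (by simpa using Finset.mem_range.mp hi)]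

lemma valF_singleton (b : Bool) : valF [b] = - bv b := by
  rw [valF_cons]; simp [sF, F]

lemma valF_cons_cons (p q c : Bool) (t : List Bool) :
    valF (p :: q :: c :: t) = valF (c :: t) + (bv c + bv q - bv p) * F (t.length + 2) := by
  rw [valF_cons, valF_cons]
  simp only [List.reverse_cons, List.length_cons]
  rw [List.append_assoc, sF_append]
  simp only [List.length_reverse]
  simp only [List.singleton_append, sF]
  have hF : F (2 + t.length) = F (1 + t.length) + F t.length := by
    rw [show 2 + t.length = t.length + 2 by omega, show 1 + t.length = t.length + 1 by omega]
    exact F_add_two t.length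
  ring_nf
  rw [hF]
  ring

lemma bound (k : ℕ) : ∀ w : List Bool, w.length = 2*k+1 → no11 w →
    -(bv w.headI) * F (2*k) ≤ valF w ∧ valF w < (1 - bv w.headI) * F (2*k+1) := by
  induction k with
  | zero =>
    intro w hl _
    obtain ⟨b, rfl⟩ : ∃ b, w = [b] := by
      match w, hl with | [b], _ => exact ⟨b, rfl⟩
    cases b <;> simp [valF_singleton, bv, F]
  | succ k ih =>
    intro w hl hc
    obtain ⟨p, q, c, t, rfl⟩ : ∃ p q c t, w = p::q::c::t := by
      match w, hl with | (p::q::c::t), _ => exact ⟨p, q, c, t, rfl⟩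
    have hlt : t.length = 2*k := by simp at hl; omega
    have hpq : ¬(p = true ∧ q = true) := (List.isChain_cons_cons.mp hc).1
    have hqc : ¬(q = true ∧ c = true) :=
      (List.isChain_cons_cons.mp (List.isChain_cons_cons.mp hc).2).1
    have hct : no11 (c::t) := (List.isChain_cons_cons.mp (List.isChain_cons_cons.mp hc).2).2
    have hrec : valF (p::q::c::t) = valF (c::t) + (bv c + bv q - bv p) * F (2*k+2) := by
      rw [valF_cons_cons, hlt]
    have hB := ih (c::t) (by simp [hlt]) hct
    have e1 : F (2*k+2) = F (2*k+1) + F (2*k) := F_add_two _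
    have e2 : F (2*(k+1)+1) = F (2*k+2) + F (2*k+1) := by
      rw [show 2*(k+1)+1 = 2*k+1+2 by ring, F_add_two, show 2*k+1+1 = 2*k+2 by ring]
    have e3 : F (2*(k+1)) = F (2*k+2) := by rw [show 2*(k+1) = 2*k+2 by ring]
    have hp1 := F_pos (2*k)
    have hp2 := F_pos (2*k+1)
    rw [hrec]
    simp only [List.headI] at hB ⊢
    cases p <;> cases q <;> cases c <;> simp_all [bv] <;>
      first
        | linarith
        | (constructor <;> linarith)
lemma head_false_of_nonneg (k : ℕ) (v : List Bool) (hl : v.length = 2*k+1) (hc : no11 v)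
    (h : 0 ≤ valF v) : v.headI = false := by
  have hb := bound k v hl hc
  cases hh : v.headI
  · rfl
  · rw [hh] at hb; simp [bv] at hb; linarith [F_pos (2*k+1)]

lemma head_true_of_neg (k : ℕ) (v : List Bool) (hl : v.length = 2*k+1) (hc : no11 v)
    (h : valF v < 0) : v.headI = true := by
  have hb := bound k v hl hc
  cases hh : v.headI
  · rw [hh] at hb; simp [bv] at hb; linarith
  · rfl

lemma build (k : ℕ) (p q : Bool) (v : List Bool) (hv : v.length = 2*k+1) (hcv : no11 v)
    (hpq : ¬(p = true ∧ q = true)) (hqc : ¬(q = true ∧ v.headI = true)) :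
    (p::q::v).length = 2*(k+1)+1 ∧ no11 (p::q::v) ∧
      valF (p::q::v) = valF v + (bv v.headI + bv q - bv p) * F (2*k+2) := by
  obtain ⟨c, t, rfl⟩ : ∃ c t, v = c::t := by
    match v, hv with | (c::t), _ => exact ⟨c, t, rfl⟩
  have hlt : t.length = 2*k := by simp at hv; omega
  refine ⟨by simp [hlt]; ring, ?_, ?_⟩
  · exact List.isChain_cons_cons.mpr ⟨hpq, List.isChain_cons_cons.mpr ⟨by simpa using hqc, hcv⟩⟩
  · rw [valF_cons_cons, hlt]; rfl

def rep : ℕ → ℤ → List Bool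
  | 0, n => [decide (n < 0)]
  | (k+1), n =>
    if n < -F (2*k) then true :: false :: rep k (n + F (2*k+2))
    else if n < 0 then true :: false :: rep k n
    else if n < F (2*k+1) then false :: false :: rep k n
    else if (rep k (n - F (2*k+2))).headI then false :: false :: rep k (n - F (2*k+2))
    else false :: true :: rep k (n - F (2*k+2))

lemma rep_good (k : ℕ) : ∀ n : ℤ, -F (2*k) ≤ n → n < F (2*k+1) →
    (rep k n).length = 2*k+1 ∧ no11 (rep k n) ∧ valF (rep k n) = n := by
  induction k with
  | zero =>
    intro n h1 h2
    norm_num [F] at h1 h2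
    refine ⟨by simp [rep], List.isChain_singleton _, ?_⟩
    have hn : n = -1 ∨ n = 0 := by omega
    rcases hn with rfl | rfl <;> simp [rep, valF_singleton, bv]
  | succ k ih =>
    intro n h1 h2
    rw [show 2*(k+1) = 2*k+2 by ring] at h1
    rw [show 2*(k+1)+1 = 2*k+3 by ring] at h2
    have e1 : F (2*k+2) = F (2*k+1) + F (2*k) := F_add_two _
    have e2 : F (2*k+3) = F (2*k+2) + F (2*k+1) := by
      rw [show 2*k+3 = 2*k+1+2 by ring, F_add_two, show 2*k+1+1 = 2*k+2 by ring]
    have hp1 := F_pos (2*k)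
    have hp2 := F_pos (2*k+1)
    simp only [rep]
    split_ifs with hb1 hb2 hb3 hb4
    · -- n ∈ [-F(2k+2), -F(2k)) : w = 10 v with valF v = n + F(2k+2) ∈ [0, F(2k+1))
      obtain ⟨hl, hc, hv⟩ := ih (n + F (2*k+2)) (by linarith) (by linarith)
      have hh : (rep k (n + F (2*k+2))).headI = false :=
        head_false_of_nonneg k _ hl hc (by rw [hv]; linarith)
      obtain ⟨L, C, V⟩ := build k true false _ hl hc (by simp) (by simp)
      exact ⟨L, C, by rw [V, hv, hh]; simp [bv]; try ring⟩
    · -- n ∈ [-F(2k), 0) : w = 10 v with valF v = n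
      obtain ⟨hl, hc, hv⟩ := ih n (by linarith) (by linarith)
      have hh : (rep k n).headI = true :=
        head_true_of_neg k _ hl hc (by rw [hv]; linarith)
      obtain ⟨L, C, V⟩ := build k true false _ hl hc (by simp) (by simp)
      exact ⟨L, C, by rw [V, hv, hh]; simp [bv]⟩
    · -- n ∈ [0, F(2k+1)) : w = 00 v with valF v = n
      obtain ⟨hl, hc, hv⟩ := ih n (by linarith) (by linarith)
      have hh : (rep k n).headI = false :=
        head_false_of_nonneg k _ hl hc (by rw [hv]; linarith)
      obtain ⟨L, C, V⟩ := build k false false _ hl hc (by simp) (by simp)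
      exact ⟨L, C, by rw [V, hv, hh]; simp [bv]⟩
    · -- n ∈ [F(2k+1), F(2k+3)), head of rep k (n - F(2k+2)) is true : w = 00 v
      obtain ⟨hl, hc, hv⟩ := ih (n - F (2*k+2)) (by linarith) (by linarith)
      obtain ⟨L, C, V⟩ := build k false false _ hl hc (by simp) (by simp)
      exact ⟨L, C, by rw [V, hv, hb4]; simp [bv]; try ring⟩
    · -- same band, head false : w = 01 v
      obtain ⟨hl, hc, hv⟩ := ih (n - F (2*k+2)) (by linarith) (by linarith)
      have hh : (rep k (n - F (2*k+2))).headI = false := by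
        simpa using hb4
      obtain ⟨L, C, V⟩ := build k false true _ hl hc (by simp) (by simp [hh])
      exact ⟨L, C, by rw [V, hv, hh]; simp [bv]; try ring⟩
lemma eq_rep (k : ℕ) : ∀ w : List Bool, w.length = 2*k+1 → no11 w → rep k (valF w) = w := by
  induction k with
  | zero =>
    intro w hl _
    obtain ⟨b, rfl⟩ : ∃ b, w = [b] := by
      match w, hl with | [b], _ => exact ⟨b, rfl⟩
    cases b <;> simp [rep, valF_singleton, bv]
  | succ k ih =>
    intro w hl hc
    obtain ⟨p, q, c, t, rfl⟩ : ∃ p q c t, w = p::q::c::t := by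
      match w, hl with | (p::q::c::t), _ => exact ⟨p, q, c, t, rfl⟩
    have hlt : t.length = 2*k := by simp at hl; omega
    have hlv : (c::t).length = 2*k+1 := by simp [hlt]
    have hpq : ¬(p = true ∧ q = true) := (List.isChain_cons_cons.mp hc).1
    have hqc : ¬(q = true ∧ c = true) :=
      (List.isChain_cons_cons.mp (List.isChain_cons_cons.mp hc).2).1
    have hct : no11 (c::t) := (List.isChain_cons_cons.mp (List.isChain_cons_cons.mp hc).2).2
    have hrec : valF (p::q::c::t) = valF (c::t) + (bv c + bv q - bv p) * F (2*k+2) := by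
      rw [valF_cons_cons, hlt]
    have hB := bound k (c::t) hlv hct
    have hih := ih (c::t) hlv hct
    have e1 : F (2*k+2) = F (2*k+1) + F (2*k) := F_add_two _
    have hp1 := F_pos (2*k)
    have hp2 := F_pos (2*k+1)
    simp only [List.headI] at hB
    simp only [rep, hrec]
    cases p <;> cases q <;> cases c <;> simp only [bv, if_true, if_false] at hB ⊢
    · -- 0 0 0 : n = m, m ∈ [0, F(2k+1))
      norm_num at hB ⊢
      rw [if_neg (by linarith), if_neg (by linarith), if_pos (by linarith), hih]
    · -- 0 0 1 : n = m + F(2k+2), m ∈ [-F(2k), 0)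
      norm_num at hB ⊢
      rw [if_neg (by linarith), if_neg (by linarith), if_neg (by linarith)]
      rw [hih]
      simp
    · -- 0 1 0 : n = m + F(2k+2), m ∈ [0, F(2k+1))
      norm_num at hB ⊢
      rw [if_neg (by linarith), if_neg (by linarith), if_neg (by linarith)]
      rw [hih]
      simp
    · -- 0 1 1 : excluded
      exact absurd ⟨rfl, rfl⟩ hqc
    · -- 1 0 0 : n = m - F(2k+2), m ∈ [0, F(2k+1))
      norm_num at hB ⊢
      rw [if_pos (by linarith)]
      rw [hih]
    · -- 1 0 1 : n = m, m ∈ [-F(2k), 0)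
      norm_num at hB ⊢
      rw [if_neg (by linarith), if_pos (by linarith), hih]
    · exact absurd ⟨rfl, rfl⟩ hpq
    · exact absurd ⟨rfl, rfl⟩ hpq

lemma prefix000_val (j : ℕ) (w : List Bool) (hl : w.length = 2*j+3) (hc : no11 w)
    (h : [false, false, false] <+: w) : 0 ≤ valF w ∧ valF w < F (2*j+1) := by
  obtain ⟨s, rfl⟩ := h
  have hls : s.length = 2*j := by simp at hl; omega
  have hcs : no11 (false::s) :=
    (List.isChain_cons_cons.mp (List.isChain_cons_cons.mp hc).2).2
  have hb := bound j (false::s) (by simp [hls]) hcs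
  simp [bv] at hb
  have : valF ([false,false,false] ++ s) = valF (false::s) := by
    show valF (false::false::false::s) = _
    rw [valF_cons_cons, hls]; simp [bv]
  rw [this]
  exact hb

lemma prefix101_val (j : ℕ) (w : List Bool) (hl : w.length = 2*j+3) (hc : no11 w)
    (h : [true, false, true] <+: w) : -F (2*j) ≤ valF w ∧ valF w < 0 := by
  obtain ⟨s, rfl⟩ := h
  have hls : s.length = 2*j := by simp at hl; omega
  have hcs : no11 (true::s) :=
    (List.isChain_cons_cons.mp (List.isChain_cons_cons.mp hc).2).2
  have hb := bound j (true::s) (by simp [hls]) hcs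
  simp [bv] at hb
  have : valF ([true,false,true] ++ s) = valF (true::s) := by
    show valF (true::false::true::s) = _
    rw [valF_cons_cons, hls]; simp [bv]
  rw [this]
  exact hb


/-- Every integer has a unique canonical Fibonacci representation: an odd-length
binary word avoiding the factor 11 and the prefixes 000 and 101. -/
theorem exists_unique_repF (n : ℤ) :
    ∃! w : List Bool, IsRep w ∧ valF w = n := by
  have hex : ∃ k : ℕ, -F (2*k) ≤ n ∧ n < F (2*k+1) := by
    refine ⟨n.natAbs, ?_, ?_⟩
    · have hF := F_ge (2 * n.natAbs)
      have h2 : -n ≤ ((2 * n.natAbs : ℕ) : ℤ) := by omega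
      linarith
    · have hF := F_ge (2 * n.natAbs + 1)
      have h2 : n < ((2 * n.natAbs + 1 : ℕ) : ℤ) := by omega
      linarith
  classical
  obtain ⟨hk1, hk2⟩ := Nat.find_spec hex
  set k0 := Nat.find hex with hk0
  obtain ⟨hl0, hc0, hv0⟩ := rep_good k0 n hk1 hk2
  have hmin : ∀ j, j < k0 → ¬(-F (2*j) ≤ n ∧ n < F (2*j+1)) := fun j hj => Nat.find_min hex hj
  refine ⟨rep k0 n, ⟨⟨?_, hc0, ?_, ?_⟩, hv0⟩, ?_⟩
  · rw [hl0, Nat.odd_iff]; omega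
  · -- no prefix 000
    intro hpre
    have h3 : 3 ≤ (rep k0 n).length := by
      have := hpre.length_le; simpa using this
    obtain ⟨j, hj⟩ : ∃ j, k0 = j + 1 := by
      refine ⟨k0 - 1, ?_⟩; omega
    have hb := prefix000_val j (rep k0 n) (by omega) hc0 hpre
    rw [hv0] at hb
    exact hmin j (by omega) ⟨by linarith [F_pos (2*j)], hb.2⟩
  · -- no prefix 101
    intro hpre
    have h3 : 3 ≤ (rep k0 n).length := by
      have := hpre.length_le; simpa using this
    obtain ⟨j, hj⟩ : ∃ j, k0 = j + 1 := by
      refine ⟨k0 - 1, ?_⟩; omega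
    have hb := prefix101_val j (rep k0 n) (by omega) hc0 hpre
    rw [hv0] at hb
    exact hmin j (by omega) ⟨hb.1, by linarith [F_pos (2*j+1)]⟩
  · -- uniqueness
    rintro w ⟨⟨hodd, hc, h000, h101⟩, hv⟩
    obtain ⟨j, hj⟩ := hodd
    have hlj : w.length = 2*j+1 := by omega
    -- n is in the interval of level j
    have hPj : -F (2*j) ≤ n ∧ n < F (2*j+1) := by
      have hb := bound j w hlj hc
      rw [hv] at hb
      cases hh : w.headI <;> rw [hh] at hb <;> simp [bv] at hb <;>
        constructor <;> linarith [F_pos (2*j), F_pos (2*j+1)]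
    have hk0j : k0 ≤ j := Nat.find_min' hex hPj
    -- j ≤ k0
    have hjk0 : j = k0 := by
      by_contra hne
      have hlt : k0 < j := by omega
      obtain ⟨i, rfl⟩ : ∃ i, j = i + 1 := ⟨j - 1, by omega⟩
      obtain ⟨p, q, c, t, rfl⟩ : ∃ p q c t, w = p::q::c::t := by
        match w, hlj with | (p::q::c::t), _ => exact ⟨p, q, c, t, rfl⟩
      have hlt2 : t.length = 2*i := by simp at hlj; omega
      have hpq : ¬(p = true ∧ q = true) := (List.isChain_cons_cons.mp hc).1
      have hqc : ¬(q = true ∧ c = true) :=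
        (List.isChain_cons_cons.mp (List.isChain_cons_cons.mp hc).2).1
      have hct : no11 (c::t) := (List.isChain_cons_cons.mp (List.isChain_cons_cons.mp hc).2).2
      have hrec : valF (p::q::c::t) = valF (c::t) + (bv c + bv q - bv p) * F (2*i+2) := by
        rw [valF_cons_cons, hlt2]
      have hB := bound i (c::t) (by simp [hlt2]) hct
      have e1 : F (2*i+2) = F (2*i+1) + F (2*i) := F_add_two _
      have hm1 : F (2*k0+1) ≤ F (2*i+1) := F_mono (by omega)
      have hm2 : F (2*k0) ≤ F (2*i) := F_mono (by omega)
      have hp1 := F_pos (2*i)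
      have hp2 := F_pos (2*i+1)
      rw [hv] at hrec
      simp only [List.headI] at hB
      cases p <;> cases q <;> cases c <;> simp only [bv, if_true, if_false] at hB hrec
      · exact h000 ⟨t, rfl⟩
      · norm_num at hB hrec; linarith
      · norm_num at hB hrec; linarith
      · exact absurd ⟨rfl, rfl⟩ hqc
      · norm_num at hB hrec; linarith
      · exact h101 ⟨t, rfl⟩
      · exact absurd ⟨rfl, rfl⟩ hpq
      · exact absurd ⟨rfl, rfl⟩ hpq
    subst hjk0
    exact (hv ▸ eq_rep k0 w hlj hc).symm
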